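/- Let 𝒜 be an unambiguous finite automaton (UFA) with n ≥ 0 states that recognizes a language L ⊆ Σ*. Then there exists a UFA with at most √(n+1) · 2^(n/2) states that recognizes the complement language Σ* \ L. -/

import Mathlib

/-- A nondeterministic finite automaton with state type `Q` and alphabet `A`:
transition relation `δ`, initial states `I`, accepting states `F`. -/
structure NFA' (Q A : Type) where
  δ : Q → A → Q → Prop
  I : Set Q
  F : Set Q

namespace NFA'

variable {Q A : Type}

/-- `M.Steps q w q'` holds iff there is a run from `q` to `q'` reading the word `w`. -/
def Steps (M : NFA' Q A) : Q → List A → Q → Prop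
  | q, [], q' => q = q'
  | q, a :: w, q' => ∃ p, M.δ q a p ∧ M.Steps p w q'

/-- An accepting run for the word `w`, given as the sequence of visited states. -/
def IsAccRun (M : NFA' Q A) (w : List A) (r : Fin (w.length + 1) → Q) : Prop :=
  r 0 ∈ M.I ∧ r (Fin.last w.length) ∈ M.F ∧
    ∀ i : Fin w.length, M.δ (r i.castSucc) (w.get i) (r i.succ)

/-- The language recognized by `M`: words with at least one accepting run. -/
def Lang (M : NFA' Q A) : Set (List A) :=
  {w | ∃ r, M.IsAccRun w r}

/-- `M` is unambiguous (a UFA) if every word has at most one accepting run. -/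
def Unambiguous (M : NFA' Q A) : Prop :=
  ∀ (w : List A) (r r' : Fin (w.length + 1) → Q),
    M.IsAccRun w r → M.IsAccRun w r' → r = r'

/-- The state set `{δ(I,w) | w ∈ Σ*}` of the forward determinization of `M`. -/
def fwdStates (M : NFA' Q A) : Set (Set Q) :=
  {S | ∃ w : List A, S = {r | ∃ q ∈ M.I, M.Steps q w r}}

/-- The state set `{δ⁻¹(w,F) | w ∈ Σ*}` of the backward determinization of `M`. -/
def bwdStates (M : NFA' Q A) : Set (Set Q) :=
  {S | ∃ w : List A, S = {r | ∃ q ∈ M.F, M.Steps r w q}}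

end NFA'

namespace NFA'

variable {Q A : Type}

-- new material

theorem steps_append {M : NFA' Q A} {u v : List A} {q q' : Q} :
    M.Steps q (u ++ v) q' ↔ ∃ p, M.Steps q u p ∧ M.Steps p v q' := by
  induction u generalizing q with
  | nil => simp [Steps]
  | cons a u ih =>
    constructor
    · rintro ⟨p, h, hs⟩
      obtain ⟨m, h1, h2⟩ := ih.1 hs
      exact ⟨m, ⟨p, h, h1⟩, h2⟩
    · rintro ⟨m, ⟨p, h, h1⟩, h2⟩
      exact ⟨p, h, ih.2 ⟨m, h1, h2⟩⟩

/-- characterize `Steps` via runs. -/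
theorem steps_iff_run {M : NFA' Q A} {w : List A} {q q' : Q} :
    M.Steps q w q' ↔ ∃ r : Fin (w.length + 1) → Q, r 0 = q ∧ r (Fin.last w.length) = q' ∧
      ∀ i : Fin w.length, M.δ (r i.castSucc) (w.get i) (r i.succ) := by
  induction w generalizing q with
  | nil =>
    constructor
    · rintro rfl
      exact ⟨fun _ => q, rfl, rfl, fun i => i.elim0⟩
    · rintro ⟨r, h0, hl, _⟩
      show q = q'
      rw [← h0, ← hl]; rfl
  | cons a w ih =>
    constructor
    · rintro ⟨p, hδ, hs⟩
      obtain ⟨r, h0, hl, ht⟩ := ih.1 hs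
      refine ⟨Fin.cons q r, rfl, ?_, ?_⟩
      · show (Fin.cons q r : Fin (w.length + 1 + 1) → Q) (Fin.last w.length).succ = q'
        rw [Fin.cons_succ]
        exact hl
      · intro i
        obtain ⟨iv, hiv⟩ := i
        cases iv with
        | zero =>
          show M.δ ((Fin.cons q r : Fin (w.length + 1 + 1) → Q) 0) a
            ((Fin.cons q r : Fin (w.length + 1 + 1) → Q) ((0 : Fin (w.length+1)).succ))
          rw [Fin.cons_zero, Fin.cons_succ, h0]
          exact hδ
        | succ j =>
          have hj : j < w.length := by simp only [List.length_cons] at hiv; omega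
          show M.δ ((Fin.cons q r : Fin (w.length + 1 + 1) → Q) ((⟨j, hj⟩ : Fin w.length).castSucc).succ)
            (w.get ⟨j, hj⟩)
            ((Fin.cons q r : Fin (w.length + 1 + 1) → Q) ((⟨j, hj⟩ : Fin w.length).succ).succ)
          rw [Fin.cons_succ, Fin.cons_succ]
          exact ht ⟨j, hj⟩
    · rintro ⟨r, h0, hl, ht⟩
      refine ⟨r 1, ?_, ?_⟩
      · have := ht ⟨0, Nat.succ_pos _⟩
        simpa [h0, show ((⟨0, Nat.succ_pos _⟩ : Fin (w.length+1)).castSucc) = 0 from rfl,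
          show ((⟨0, Nat.succ_pos _⟩ : Fin (w.length+1)).succ) = 1 from rfl] using this
      · refine ih.2 ⟨fun i => r i.succ, rfl, ?_, ?_⟩
        · show r (Fin.last w.length).succ = q'
          exact hl
        · intro i
          have := ht i.succ
          have h1 : ((i.succ : Fin (w.length+1)).castSucc) = (i.castSucc).succ := rfl
          rw [h1] at this
          simpa using this

theorem mem_lang_iff {M : NFA' Q A} {w : List A} :
    w ∈ M.Lang ↔ ∃ q ∈ M.I, ∃ f ∈ M.F, M.Steps q w f := by
  constructor
  · rintro ⟨r, h0, hl, ht⟩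
    exact ⟨r 0, h0, r (Fin.last w.length), hl, steps_iff_run.2 ⟨r, rfl, rfl, ht⟩⟩
  · rintro ⟨q, hq, f, hf, hs⟩
    obtain ⟨r, h0, hl, ht⟩ := steps_iff_run.1 hs
    exact ⟨r, h0.symm ▸ hq, hl.symm ▸ hf, ht⟩


/-- forward reachability set -/
def reach (M : NFA' Q A) (w : List A) : Set Q := {r | ∃ q ∈ M.I, M.Steps q w r}

/-- backward reachability set -/
def coreach (M : NFA' Q A) (w : List A) : Set Q := {r | ∃ q ∈ M.F, M.Steps r w q}

theorem reach_mem_fwdStates (M : NFA' Q A) (w : List A) : M.reach w ∈ M.fwdStates :=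
  ⟨w, rfl⟩

theorem coreach_mem_bwdStates (M : NFA' Q A) (w : List A) : M.coreach w ∈ M.bwdStates :=
  ⟨w, rfl⟩

theorem reach_nil (M : NFA' Q A) : M.reach [] = M.I := by
  ext q; simp [reach, Steps]

theorem coreach_nil (M : NFA' Q A) : M.coreach [] = M.F := by
  ext q; simp [coreach, Steps]

/-- one-step image -/
def stepSet (M : NFA' Q A) (S : Set Q) (a : A) : Set Q := {q' | ∃ q ∈ S, M.δ q a q'}

/-- one-step preimage -/
def preSet (M : NFA' Q A) (S : Set Q) (a : A) : Set Q := {q | ∃ p ∈ S, M.δ q a p}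

theorem reach_snoc (M : NFA' Q A) (w : List A) (a : A) :
    M.reach (w ++ [a]) = M.stepSet (M.reach w) a := by
  ext q'
  constructor
  · rintro ⟨q, hq, hs⟩
    obtain ⟨p, h1, p', h2, h3⟩ := steps_append.1 hs
    cases h3
    exact ⟨p, ⟨q, hq, h1⟩, h2⟩
  · rintro ⟨p, ⟨q, hq, h1⟩, h2⟩
    exact ⟨q, hq, steps_append.2 ⟨p, h1, ⟨q', h2, rfl⟩⟩⟩

theorem coreach_cons (M : NFA' Q A) (a : A) (w : List A) :
    M.coreach (a :: w) = M.preSet (M.coreach w) a := by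
  ext q
  constructor
  · rintro ⟨f, hf, p, h1, h2⟩
    exact ⟨p, ⟨f, hf, h2⟩, h1⟩
  · rintro ⟨p, ⟨f, hf, h2⟩, h1⟩
    exact ⟨f, hf, p, h1, h2⟩


section Fwd

variable (M : NFA' Q A)

/-- the forward (subset-construction) complement automaton -/
def fwdCompl : NFA' (↥M.fwdStates) A where
  δ := fun S a S' => (S' : Set Q) = M.stepSet S a
  I := {S | (S : Set Q) = M.I}
  F := {S | (S : Set Q) ∩ M.F = ∅}

/-- the canonical run of the forward automaton -/
def fwdRun (w : List A) (i : Fin (w.length + 1)) : ↥M.fwdStates :=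
  ⟨M.reach (w.take i), M.reach_mem_fwdStates _⟩

theorem fwdRun_zero (w : List A) : (M.fwdRun w 0 : Set Q) = M.I := by
  simp [fwdRun, reach_nil]

theorem fwdRun_last (w : List A) : (M.fwdRun w (Fin.last w.length) : Set Q) = M.reach w := by
  simp [fwdRun]

theorem fwdRun_trans (w : List A) (i : Fin w.length) :
    (M.fwdCompl).δ (M.fwdRun w i.castSucc) (w.get i) (M.fwdRun w i.succ) := by
  show (M.fwdRun w i.succ : Set Q) = M.stepSet (M.fwdRun w i.castSucc) (w.get i)
  show M.reach (w.take (i.1 + 1)) = M.stepSet (M.reach (w.take i.1)) (w.get i)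
  rw [← List.take_concat_get' w i.1 i.2, reach_snoc]
  rfl

theorem run_eq_fwdRun (w : List A) (r : Fin (w.length + 1) → ↥M.fwdStates)
    (h0 : (r 0 : Set Q) = M.I)
    (ht : ∀ i : Fin w.length, (M.fwdCompl).δ (r i.castSucc) (w.get i) (r i.succ)) :
    r = M.fwdRun w := by
  funext i
  induction i using Fin.induction with
  | zero =>
    apply Subtype.ext
    rw [h0, fwdRun_zero]
  | succ j ih =>
    apply Subtype.ext
    have h1 := ht j
    have h2 := M.fwdRun_trans w j
    show (r j.succ : Set Q) = (M.fwdRun w j.succ : Set Q)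
    rw [h1, h2, ih]

theorem fwdCompl_unambiguous : (M.fwdCompl).Unambiguous := by
  intro w r r' hr hr'
  rw [M.run_eq_fwdRun w r hr.1 hr.2.2, M.run_eq_fwdRun w r' hr'.1 hr'.2.2]

theorem mem_lang_iff_reach {w : List A} : w ∈ M.Lang ↔ (M.reach w ∩ M.F).Nonempty := by
  rw [mem_lang_iff]
  constructor
  · rintro ⟨q, hq, f, hf, hs⟩
    exact ⟨f, ⟨q, hq, hs⟩, hf⟩
  · rintro ⟨f, ⟨q, hq, hs⟩, hf⟩
    exact ⟨q, hq, f, hf, hs⟩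

theorem fwdCompl_lang : (M.fwdCompl).Lang = M.Langᶜ := by
  ext w
  constructor
  · rintro ⟨r, hr⟩
    have he : r = M.fwdRun w := M.run_eq_fwdRun w r hr.1 hr.2.2
    have hF : (M.fwdRun w (Fin.last w.length) : Set Q) ∩ M.F = ∅ := by
      rw [← he]; exact hr.2.1
    rw [fwdRun_last] at hF
    intro hw
    obtain ⟨x, hx⟩ := M.mem_lang_iff_reach.1 hw
    rw [hF] at hx
    exact hx
  · intro hw
    refine ⟨M.fwdRun w, ?_, ?_, M.fwdRun_trans w⟩
    · show (M.fwdRun w 0 : Set Q) = M.I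
      exact M.fwdRun_zero w
    · show (M.fwdRun w (Fin.last w.length) : Set Q) ∩ M.F = ∅
      rw [fwdRun_last]
      rw [Set.eq_empty_iff_forall_notMem]
      intro x hx
      exact hw (M.mem_lang_iff_reach.2 ⟨x, hx⟩)

end Fwd

section Bwd

variable (M : NFA' Q A)

/-- the backward (co-deterministic) complement automaton -/
def bwdCompl : NFA' (↥M.bwdStates) A where
  δ := fun T a T' => (T : Set Q) = M.preSet T' a
  I := {T | (T : Set Q) ∩ M.I = ∅}
  F := {T | (T : Set Q) = M.F}

/-- the canonical run of the backward automaton -/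
def bwdRun (w : List A) (i : Fin (w.length + 1)) : ↥M.bwdStates :=
  ⟨M.coreach (w.drop i), M.coreach_mem_bwdStates _⟩

theorem bwdRun_zero (w : List A) : (M.bwdRun w 0 : Set Q) = M.coreach w := by
  simp [bwdRun]

theorem bwdRun_last (w : List A) : (M.bwdRun w (Fin.last w.length) : Set Q) = M.F := by
  simp [bwdRun, coreach_nil]

theorem bwdRun_trans (w : List A) (i : Fin w.length) :
    (M.bwdCompl).δ (M.bwdRun w i.castSucc) (w.get i) (M.bwdRun w i.succ) := by
  show (M.bwdRun w i.castSucc : Set Q) = M.preSet (M.bwdRun w i.succ) (w.get i)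
  show M.coreach (w.drop i.1) = M.preSet (M.coreach (w.drop (i.1 + 1))) (w.get i)
  rw [List.drop_eq_getElem_cons i.2, coreach_cons]
  rfl

theorem run_eq_bwdRun (w : List A) (r : Fin (w.length + 1) → ↥M.bwdStates)
    (hl : (r (Fin.last w.length) : Set Q) = M.F)
    (ht : ∀ i : Fin w.length, (M.bwdCompl).δ (r i.castSucc) (w.get i) (r i.succ)) :
    r = M.bwdRun w := by
  funext i
  induction i using Fin.reverseInduction with
  | last =>
    apply Subtype.ext
    rw [hl, bwdRun_last]
  | cast j ih =>
    apply Subtype.ext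
    have h1 := ht j
    have h2 := M.bwdRun_trans w j
    show (r j.castSucc : Set Q) = (M.bwdRun w j.castSucc : Set Q)
    rw [h1, h2, ih]

theorem bwdCompl_unambiguous : (M.bwdCompl).Unambiguous := by
  intro w r r' hr hr'
  rw [M.run_eq_bwdRun w r hr.2.1 hr.2.2, M.run_eq_bwdRun w r' hr'.2.1 hr'.2.2]

theorem mem_lang_iff_coreach {w : List A} : w ∈ M.Lang ↔ (M.coreach w ∩ M.I).Nonempty := by
  rw [mem_lang_iff]
  constructor
  · rintro ⟨q, hq, f, hf, hs⟩
    exact ⟨q, ⟨f, hf, hs⟩, hq⟩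
  · rintro ⟨q, ⟨f, hf, hs⟩, hq⟩
    exact ⟨q, hq, f, hf, hs⟩

theorem bwdCompl_lang : (M.bwdCompl).Lang = M.Langᶜ := by
  ext w
  constructor
  · rintro ⟨r, hr⟩
    have he : r = M.bwdRun w := M.run_eq_bwdRun w r hr.2.1 hr.2.2
    have hI : (M.bwdRun w 0 : Set Q) ∩ M.I = ∅ := by
      rw [← he]; exact hr.1
    rw [bwdRun_zero] at hI
    intro hw
    obtain ⟨x, hx⟩ := M.mem_lang_iff_coreach.1 hw
    rw [hI] at hx
    exact hx
  · intro hw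
    refine ⟨M.bwdRun w, ?_, ?_, M.bwdRun_trans w⟩
    · show (M.bwdRun w 0 : Set Q) ∩ M.I = ∅
      rw [bwdRun_zero, Set.eq_empty_iff_forall_notMem]
      intro x hx
      exact hw (M.mem_lang_iff_coreach.2 ⟨x, hx⟩)
    · show (M.bwdRun w (Fin.last w.length) : Set Q) = M.F
      exact M.bwdRun_last w

end Bwd




section Mid2

/-- concatenation of two runs -/
def midRun (u v : List A) (r₁ : Fin (u.length + 1) → Q) (r₂ : Fin (v.length + 1) → Q) :
    Fin ((u ++ v).length + 1) → Q :=
  fun i => if h : (i : ℕ) ≤ u.length then r₁ ⟨i, Nat.lt_succ_of_le h⟩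
    else r₂ ⟨(i : ℕ) - u.length, by
      have := i.2
      simp only [List.length_append] at this
      omega⟩

variable (M : NFA' Q A)

theorem midRun_left (u v : List A) (r₁ : Fin (u.length + 1) → Q) (r₂ : Fin (v.length + 1) → Q) (j : ℕ) (hj : j ≤ u.length)
    (hj2 : j < (u ++ v).length + 1) :
    midRun u v r₁ r₂ ⟨j, hj2⟩ = r₁ ⟨j, Nat.lt_succ_of_le hj⟩ := dif_pos hj

theorem midRun_right (u v : List A) (r₁ : Fin (u.length + 1) → Q) (r₂ : Fin (v.length + 1) → Q) (j : ℕ) (hj : ¬ j ≤ u.length)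
    (hj2 : j < (u ++ v).length + 1) :
    midRun u v r₁ r₂ ⟨j, hj2⟩ = r₂ ⟨j - u.length, by
      simp only [List.length_append] at hj2; omega⟩ := dif_neg hj

theorem midRun_spec (u v : List A) (r₁ : Fin (u.length + 1) → Q) (r₂ : Fin (v.length + 1) → Q)
    (hmid : r₁ (Fin.last u.length) = r₂ 0)
    (h₁ : ∀ i : Fin u.length, M.δ (r₁ i.castSucc) (u.get i) (r₁ i.succ))
    (h₂ : ∀ i : Fin v.length, M.δ (r₂ i.castSucc) (v.get i) (r₂ i.succ))
    (hk : u.length < (u ++ v).length + 1) :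
    midRun u v r₁ r₂ 0 = r₁ 0 ∧
    midRun u v r₁ r₂ (Fin.last (u ++ v).length) = r₂ (Fin.last v.length) ∧
    midRun u v r₁ r₂ ⟨u.length, hk⟩ = r₁ (Fin.last u.length) ∧
    ∀ i : Fin (u ++ v).length,
      M.δ (midRun u v r₁ r₂ i.castSucc) ((u ++ v).get i) (midRun u v r₁ r₂ i.succ) := by
  have len : (u ++ v).length = u.length + v.length := List.length_append
  refine ⟨?_, ?_, ?_, ?_⟩
  · show midRun u v r₁ r₂ ⟨0, Nat.succ_pos _⟩ = r₁ 0
    rw [midRun_left (A := A) u v r₁ r₂ 0 (Nat.zero_le _)]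
    rfl
  · show midRun u v r₁ r₂ ⟨(u ++ v).length, Nat.lt_succ_self _⟩ = r₂ (Fin.last v.length)
    by_cases hv : (u ++ v).length ≤ u.length
    · rw [midRun_left (A := A) u v r₁ r₂ _ hv]
      have hv0 : v.length = 0 := by
        simp only [List.length_append] at hv; omega
      have e1 : (⟨(u ++ v).length, Nat.lt_succ_of_le hv⟩ : Fin (u.length + 1)) =
          Fin.last u.length := by
        apply Fin.ext
        show (u ++ v).length = u.length
        simp only [List.length_append]; omega
      rw [e1, hmid]
      apply congrArg
      apply Fin.ext
      simp [hv0]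
    · rw [midRun_right (A := A) u v r₁ r₂ _ hv]
      apply congrArg
      apply Fin.ext
      simp [len]
  · rw [midRun_left (A := A) u v r₁ r₂ u.length (le_refl _)]
    rfl
  · intro i
    have hi := i.2
    clear hi
    have hi : (i : ℕ) < u.length + v.length := by
      have h2 := i.2
      simp only [List.length_append] at h2
      exact h2
    by_cases hc : (i : ℕ) + 1 ≤ u.length
    · have e1 : i.castSucc = ⟨(i : ℕ), Nat.lt_succ_of_lt i.2⟩ := rfl
      have e2 : i.succ = ⟨(i : ℕ) + 1, Nat.succ_lt_succ i.2⟩ := rfl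
      rw [e1, e2, midRun_left (A := A) u v r₁ r₂ (i : ℕ) (by omega),
        midRun_left (A := A) u v r₁ r₂ ((i : ℕ) + 1) hc]
      have e3 : (u ++ v).get i = u.get ⟨(i : ℕ), by omega⟩ := by
        show (u ++ v)[(i : ℕ)] = u[(i : ℕ)]
        exact List.getElem_append_left (by omega)
      rw [e3]
      exact h₁ ⟨(i : ℕ), by omega⟩
    · have hge : u.length ≤ (i : ℕ) := by omega
      have ecast : midRun u v r₁ r₂ i.castSucc =
          r₂ ⟨(i : ℕ) - u.length, by omega⟩ := by
        by_cases he : (i : ℕ) = u.length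
        · have e1 : i.castSucc = ⟨(i : ℕ), Nat.lt_succ_of_lt i.2⟩ := rfl
          rw [e1, midRun_left (A := A) u v r₁ r₂ (i : ℕ) (le_of_eq he)]
          have e4 : (⟨(i : ℕ), Nat.lt_succ_of_le (le_of_eq he)⟩ : Fin (u.length + 1)) =
              Fin.last u.length := by apply Fin.ext; simp [he]
          rw [e4, hmid]
          apply congrArg
          apply Fin.ext
          simp [he]
        · have e1 : i.castSucc = ⟨(i : ℕ), Nat.lt_succ_of_lt i.2⟩ := rfl
          rw [e1, midRun_right (A := A) u v r₁ r₂ (i : ℕ) (by omega)]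
      have e2 : i.succ = ⟨(i : ℕ) + 1, Nat.succ_lt_succ i.2⟩ := rfl
      have esucc : midRun u v r₁ r₂ i.succ =
          r₂ ⟨(i : ℕ) + 1 - u.length, by omega⟩ := by
        rw [e2, midRun_right (A := A) u v r₁ r₂ ((i : ℕ) + 1) (by omega)]
      rw [ecast, esucc]
      have e3 : (u ++ v).get i = v.get ⟨(i : ℕ) - u.length, by omega⟩ := by
        show (u ++ v)[(i : ℕ)] = v[(i : ℕ) - u.length]
        exact List.getElem_append_right hge
      rw [e3]
      have e5 : (⟨(i : ℕ) + 1 - u.length, by omega⟩ : Fin (v.length + 1)) =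
          (⟨(i : ℕ) - u.length, by omega⟩ : Fin v.length).succ := by
        apply Fin.ext; simp; omega
      rw [e5]
      exact h₂ ⟨(i : ℕ) - u.length, by omega⟩

theorem reach_coreach_subsingleton (hM : M.Unambiguous) {S T : Set Q}
    (hS : S ∈ M.fwdStates) (hT : T ∈ M.bwdStates) : (S ∩ T).Subsingleton := by
  obtain ⟨u, rfl⟩ := hS
  obtain ⟨v, rfl⟩ := hT
  intro p hp q hq
  have hk : u.length < (u ++ v).length + 1 := by
    simp only [List.length_append]; omega
  have build : ∀ x : Q, x ∈ M.reach u → x ∈ M.coreach v →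
      ∃ r, M.IsAccRun (u ++ v) r ∧ r ⟨u.length, hk⟩ = x := by
    intro x hxu hxv
    obtain ⟨q₀, hq₀, hs₁⟩ := hxu
    obtain ⟨f, hf, hs₂⟩ := hxv
    obtain ⟨r₁, h10, h1l, h1t⟩ := steps_iff_run.1 hs₁
    obtain ⟨r₂, h20, h2l, h2t⟩ := steps_iff_run.1 hs₂
    obtain ⟨m0, ml, mm, mt⟩ := midRun_spec M u v r₁ r₂ (by rw [h1l, h20]) h1t h2t hk
    refine ⟨midRun u v r₁ r₂, ⟨?_, ?_, mt⟩, ?_⟩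
    · rw [m0, h10]; exact hq₀
    · rw [ml, h2l]; exact hf
    · rw [mm, h1l]
  obtain ⟨rp, hrp, hrpm⟩ := build p hp.1 hp.2
  obtain ⟨rq, hrq, hrqm⟩ := build q hq.1 hq.2
  have := hM (u ++ v) rp rq hrp hrq
  rw [← hrpm, ← hrqm, this]

end Mid2

end NFA'



section Counting

open scoped symmDiff

variable {α : Type} [DecidableEq α]

/-- helper: if `f` sends members of `ℱ` injectively to singletons inside `W`,
then `ℱ` has at most `W.card` elements. -/
theorem card_le_of_singleton_fibers (ℱ : Finset (Finset α)) (f : Finset α → Finset α)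
    (W : Finset α) (h1 : ∀ E ∈ ℱ, ∃ y ∈ W, f E = {y}) (h2 : Set.InjOn f ℱ) :
    ℱ.card ≤ W.card := by
  calc ℱ.card = (ℱ.image f).card := (Finset.card_image_of_injOn h2).symm
    _ ≤ (W.image fun y => ({y} : Finset α)).card := by
        apply Finset.card_le_card
        intro s hs
        simp only [Finset.mem_image] at hs ⊢
        obtain ⟨E, hE, rfl⟩ := hs
        obtain ⟨y, hy, hfy⟩ := h1 E hE
        exact ⟨y, hy, hfy.symm⟩
    _ ≤ W.card := Finset.card_image_le

/-- Lemma A, single-size case. -/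
theorem close_family_card_single (D : Finset α) (ℱ : Finset (Finset α)) (k : ℕ)
    (hsub : ∀ S ∈ ℱ, S ⊆ D)
    (hclose : ∀ S ∈ ℱ, ∀ S' ∈ ℱ, (S \ S').card ≤ 1)
    (hcards : ∀ S ∈ ℱ, S.card = k) :
    ℱ.card ≤ D.card + 1 := by
  have hdiff1 : ∀ S ∈ ℱ, ∀ S' ∈ ℱ, S ≠ S' → (S \ S').card = 1 := by
    intro S hS S' hS' hne
    have h := hclose S hS S' hS'
    rcases Nat.lt_or_ge (S \ S').card 1 with h0 | h1
    · exfalso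
      have hsub' : S ⊆ S' := by
        rw [← Finset.sdiff_eq_empty_iff_subset]
        exact Finset.card_eq_zero.1 (by omega)
      exact hne (Finset.eq_of_subset_of_card_le hsub' (by rw [hcards S hS, hcards S' hS']))
    · omega
  by_cases hsmall : ℱ.card ≤ 1
  · omega
  obtain ⟨A, hA, B, hB, hAB⟩ := Finset.one_lt_card.1 (show 1 < ℱ.card by omega)
  set X := A ∩ B with hX
  have hk1 : A.card = k := hcards A hA
  have hXcard : X.card + 1 = k := by
    have h := Finset.card_inter_add_card_sdiff A B
    rw [hdiff1 A hA B hB hAB, hk1, ← hX] at h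
    omega
  by_cases hXall : ∀ E ∈ ℱ, X ⊆ E
  · have := card_le_of_singleton_fibers ℱ (fun E => E \ X) (D \ X) ?_ ?_
    · have : (D \ X).card ≤ D.card := Finset.card_le_card (Finset.sdiff_subset)
      omega
    · intro E hE
      have hXE := hXall E hE
      have hcard : (E \ X).card = 1 := by
        have h1 := Finset.card_sdiff_of_subset hXE
        rw [hcards E hE] at h1
        omega
      obtain ⟨y, hy⟩ := Finset.card_eq_one.1 hcard
      refine ⟨y, ?_, hy⟩
      have hyE : y ∈ E \ X := hy ▸ Finset.mem_singleton_self y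
      rw [Finset.mem_sdiff] at hyE ⊢
      exact ⟨hsub E hE hyE.1, hyE.2⟩
    · intro E hE E' hE' hfe
      simp only at hfe
      have h1 : X ∪ (E \ X) = E := Finset.union_sdiff_of_subset (hXall E hE)
      have h2 : X ∪ (E' \ X) = E' := Finset.union_sdiff_of_subset (hXall E' hE')
      rw [← h1, ← h2, hfe]
  · push_neg at hXall
    obtain ⟨C, hC, hXC⟩ := hXall
    obtain ⟨x, hxX, hxC⟩ := Finset.not_subset.1 hXC
    set Y := A ∪ B with hY
    have hYcard : Y.card = k + 1 := by
      have := Finset.card_inter_add_card_sdiff B A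
      have h2 : (B \ A).card = 1 := hdiff1 B hB A hA (Ne.symm hAB)
      have h3 : Y.card = (B \ A).card + A.card := by
        rw [hY, Finset.union_comm]
        exact (Finset.card_sdiff_add_card B A).symm
      omega
    -- every set not containing some element x' outside it is contained in things
    have herase : ∀ E ∈ ℱ, ∀ G ∈ ℱ, ∀ x' , x' ∈ E → x' ∉ G → E.erase x' ⊆ G := by
      intro E hE G hG x' hx'E hx'G
      have h1 : x' ∈ E \ G := Finset.mem_sdiff.2 ⟨hx'E, hx'G⟩
      have h2 : E \ G = {x'} := by
        apply (Finset.eq_of_subset_of_card_le (Finset.singleton_subset_iff.2 h1) ?_).symm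
        rw [Finset.card_singleton]
        exact hclose E hE G hG
      intro u hu
      rw [Finset.mem_erase] at hu
      by_contra huG
      have : u ∈ E \ G := Finset.mem_sdiff.2 ⟨hu.2, huG⟩
      rw [h2, Finset.mem_singleton] at this
      exact hu.1 this
    have hCeq : C = Y.erase x := by
      have hxA : x ∈ A := Finset.mem_of_mem_inter_left hxX
      have hxB : x ∈ B := Finset.mem_of_mem_inter_right hxX
      have h1 : A.erase x ⊆ C := herase A hA C hC x hxA hxC
      have h2 : B.erase x ⊆ C := herase B hB C hC x hxB hxC
      have h3 : Y.erase x ⊆ C := by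
        intro u hu
        rw [Finset.mem_erase, Finset.mem_union] at hu
        rcases hu.2 with h | h
        · exact h1 (Finset.mem_erase.2 ⟨hu.1, h⟩)
        · exact h2 (Finset.mem_erase.2 ⟨hu.1, h⟩)
      refine (Finset.eq_of_subset_of_card_le h3 ?_).symm
      rw [Finset.card_erase_of_mem (Finset.mem_union_left B hxA), hYcard, hcards C hC]
      omega
    have hallY : ∀ E ∈ ℱ, E ⊆ Y := by
      intro E hE
      by_contra hEY
      obtain ⟨e, heE, heY⟩ := Finset.not_subset.1 hEY
      have heA : e ∉ A := fun h => heY (Finset.mem_union_left B h)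
      have heB : e ∉ B := fun h => heY (Finset.mem_union_right A h)
      have heC : e ∉ C := by rw [hCeq]; exact fun h => heY (Finset.mem_of_mem_erase h)
      have h1 : E.erase e ⊆ A := herase E hE A hA e heE heA
      have h2 : E.erase e ⊆ B := herase E hE B hB e heE heB
      have h3 : E.erase e ⊆ C := herase E hE C hC e heE heC
      have hEX : E.erase e ⊆ X.erase x := by
        intro u hu
        refine Finset.mem_erase.2 ⟨fun hux => hxC (hux ▸ h3 hu), Finset.mem_inter.2 ⟨h1 hu, h2 hu⟩⟩
      have hc1 : (E.erase e).card = E.card - 1 := Finset.card_erase_of_mem heE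
      have hc2 : (X.erase x).card = X.card - 1 := Finset.card_erase_of_mem hxX
      have hc3 : (E.erase e).card ≤ (X.erase x).card := Finset.card_le_card hEX
      have hc4 : 1 ≤ X.card := Finset.card_pos.2 ⟨x, hxX⟩
      have hc5 : E.card = k := hcards E hE
      omega
    have := card_le_of_singleton_fibers ℱ (fun E => Y \ E) Y ?_ ?_
    · have : Y.card ≤ D.card := Finset.card_le_card (by
        intro u hu
        rw [hY, Finset.mem_union] at hu
        rcases hu with h | h
        · exact hsub A hA h
        · exact hsub B hB h)
      omega
    · intro E hE
      have hcard : (Y \ E).card = 1 := by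
        have h1 := Finset.card_sdiff_of_subset (hallY E hE)
        rw [hcards E hE, hYcard] at h1
        omega
      obtain ⟨y, hy⟩ := Finset.card_eq_one.1 hcard
      refine ⟨y, ?_, hy⟩
      have hyY : y ∈ Y \ E := hy ▸ Finset.mem_singleton_self y
      exact (Finset.mem_sdiff.1 hyY).1
    · intro E hE E' hE' hfe
      simp only at hfe
      have h1 := Finset.sdiff_sdiff_eq_self (hallY E hE)
      have h2 := Finset.sdiff_sdiff_eq_self (hallY E' hE')
      rw [← h1, ← h2, hfe]

/-- Lemma A: a family of subsets of `D` with pairwise differences of size ≤ 1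
has at most `D.card + 1` members. -/
theorem close_family_card (D : Finset α) (ℱ : Finset (Finset α))
    (hsub : ∀ S ∈ ℱ, S ⊆ D)
    (hclose : ∀ S ∈ ℱ, ∀ S' ∈ ℱ, (S \ S').card ≤ 1) :
    ℱ.card ≤ D.card + 1 := by
  by_cases hne : ℱ.Nonempty
  swap
  · rw [Finset.not_nonempty_iff_eq_empty] at hne
    rw [hne]
    simp
  obtain ⟨B₀, hB₀, hmin⟩ := Finset.exists_min_image ℱ Finset.card hne
  set k := B₀.card with hk
  have hsize : ∀ S ∈ ℱ, S.card = k ∨ S.card = k + 1 := by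
    intro S hS
    have h1 := hmin S hS
    have h2 := Finset.card_inter_add_card_sdiff S B₀
    have h3 : (S ∩ B₀).card ≤ k := Finset.card_le_card Finset.inter_subset_right
    have h4 := hclose S hS B₀ hB₀
    omega
  set ℱk := ℱ.filter (fun S => S.card = k) with hℱk
  set ℱ1 := ℱ.filter (fun S => S.card = k + 1) with hℱ1
  have hcover : ℱ ⊆ ℱk ∪ ℱ1 := by
    intro S hS
    rw [Finset.mem_union, hℱk, hℱ1, Finset.mem_filter, Finset.mem_filter]
    rcases hsize S hS with h | h
    · exact Or.inl ⟨hS, h⟩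
    · exact Or.inr ⟨hS, h⟩
  have hcard : ℱ.card ≤ ℱk.card + ℱ1.card :=
    le_trans (Finset.card_le_card hcover) (Finset.card_union_le _ _)
  have hB₀k : B₀ ∈ ℱk := by
    rw [hℱk, Finset.mem_filter]
    exact ⟨hB₀, rfl⟩
  have hB₀D : B₀ ⊆ D := hsub B₀ hB₀
  have hkD : k ≤ D.card := Finset.card_le_card hB₀D
  by_cases hone : ℱ1.Nonempty
  · obtain ⟨A₀, hA₀⟩ := hone
    rw [hℱ1, Finset.mem_filter] at hA₀
    have hsubk : ∀ S ∈ ℱk, ∀ A ∈ ℱ1, S ⊆ A := by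
      intro S hS A hA
      rw [hℱk, Finset.mem_filter] at hS
      rw [hℱ1, Finset.mem_filter] at hA
      have e1 := Finset.card_inter_add_card_sdiff A S
      have e2 := hclose A hA.1 S hS.1
      have e3 := Finset.card_inter_add_card_sdiff S A
      have e4 : (A ∩ S).card = (S ∩ A).card := by rw [Finset.inter_comm]
      have e5 : (S \ A).card = 0 := by omega
      rw [← Finset.sdiff_eq_empty_iff_subset]
      exact Finset.card_eq_zero.1 e5
    have hk1D : k + 1 ≤ D.card := by
      have := Finset.card_le_card (hsub A₀ hA₀.1)
      omega
    have hFk : ℱk.card ≤ k + 1 := by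
      have := card_le_of_singleton_fibers ℱk (fun S => A₀ \ S) A₀ ?_ ?_
      · rw [hA₀.2] at this
        exact this
      · intro S hS
        have hSA : S ⊆ A₀ := hsubk S hS A₀ (by rw [hℱ1, Finset.mem_filter]; exact hA₀)
        have hScard : S.card = k := by
          rw [hℱk, Finset.mem_filter] at hS
          exact hS.2
        have hcard1 : (A₀ \ S).card = 1 := by
          rw [Finset.card_sdiff_of_subset hSA, hA₀.2, hScard]
          omega
        obtain ⟨y, hy⟩ := Finset.card_eq_one.1 hcard1
        refine ⟨y, ?_, hy⟩
        have : y ∈ A₀ \ S := hy ▸ Finset.mem_singleton_self y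
        exact (Finset.mem_sdiff.1 this).1
      · intro S hS S' hS' hfe
        simp only at hfe
        have hSA : S ⊆ A₀ := hsubk S hS A₀ (by rw [hℱ1, Finset.mem_filter]; exact hA₀)
        have hSA' : S' ⊆ A₀ := hsubk S' hS' A₀ (by rw [hℱ1, Finset.mem_filter]; exact hA₀)
        rw [← Finset.sdiff_sdiff_eq_self hSA, ← Finset.sdiff_sdiff_eq_self hSA', hfe]
    by_cases htwo : 1 < ℱk.card
    · obtain ⟨S1, hS1, S2, hS2, hS12⟩ := Finset.one_lt_card.1 htwo
      have hF1sub : ℱ1 ⊆ {S1 ∪ S2} := by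
        intro E hE
        have h1 : S1 ⊆ E := hsubk S1 hS1 E hE
        have h2 : S2 ⊆ E := hsubk S2 hS2 E hE
        have hc1 : (S2 \ S1).card ≠ 0 := by
          intro h0
          apply hS12
          have hsub21 : S2 ⊆ S1 := by
            rw [← Finset.sdiff_eq_empty_iff_subset]
            exact Finset.card_eq_zero.1 h0
          rw [hℱk, Finset.mem_filter] at hS1 hS2
          exact (Finset.eq_of_subset_of_card_le hsub21 (by omega)).symm
        have hc2 : k + 1 ≤ (S1 ∪ S2).card := by
          have := Finset.card_sdiff_add_card S2 S1
          rw [Finset.union_comm] at this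
          rw [hℱk, Finset.mem_filter] at hS1
          omega
        have hE' := hE
        rw [hℱ1, Finset.mem_filter] at hE'
        have : E = S1 ∪ S2 := by
          apply (Finset.eq_of_subset_of_card_le (Finset.union_subset h1 h2) ?_).symm
          omega
        rw [Finset.mem_singleton]
        exact this
      have hF1 : ℱ1.card ≤ 1 := by
        have := Finset.card_le_card hF1sub
        simpa using this
      omega
    · have hFk1 : ℱk.card = 1 := by
        have : 1 ≤ ℱk.card := Finset.card_pos.2 ⟨B₀, hB₀k⟩
        omega
      have hF1 : ℱ1.card ≤ (D \ B₀).card := by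
        apply card_le_of_singleton_fibers ℱ1 (fun A => A \ B₀) (D \ B₀)
        · intro E hE
          have hBE : B₀ ⊆ E := hsubk B₀ hB₀k E hE
          have hEcard : E.card = k + 1 := by
            rw [hℱ1, Finset.mem_filter] at hE
            exact hE.2
          have hcard1 : (E \ B₀).card = 1 := by
            rw [Finset.card_sdiff_of_subset hBE, hEcard]
            omega
          obtain ⟨y, hy⟩ := Finset.card_eq_one.1 hcard1
          refine ⟨y, ?_, hy⟩
          have hyE : y ∈ E \ B₀ := hy ▸ Finset.mem_singleton_self y
          rw [Finset.mem_sdiff] at hyE ⊢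
          refine ⟨hsub E ?_ hyE.1, hyE.2⟩
          rw [hℱ1, Finset.mem_filter] at hE
          exact hE.1
        · intro E hE E' hE' hfe
          simp only at hfe
          have h1 : B₀ ∪ (E \ B₀) = E := Finset.union_sdiff_of_subset (hsubk B₀ hB₀k E hE)
          have h2 : B₀ ∪ (E' \ B₀) = E' := Finset.union_sdiff_of_subset (hsubk B₀ hB₀k E' hE')
          rw [← h1, ← h2, hfe]
      have hDB : (D \ B₀).card = D.card - k := by
        rw [Finset.card_sdiff_of_subset hB₀D]
      omega
  · have hcards : ∀ S ∈ ℱ, S.card = k := by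
      intro S hS
      rcases hsize S hS with h | h
      · exact h
      · exfalso
        exact hone ⟨S, by rw [hℱ1, Finset.mem_filter]; exact ⟨hS, h⟩⟩
    exact close_family_card_single D ℱ k hsub hclose hcards


variable [Fintype α]

/-- The key counting bound: two cross-1-intersecting families have product at most `(n+1)·2^n`. -/
theorem cross_card_mul (𝒮 𝒯 : Finset (Finset α))
    (h : ∀ s ∈ 𝒮, ∀ t ∈ 𝒯, (s ∩ t).card ≤ 1) :
    𝒮.card * 𝒯.card ≤ (Fintype.card α + 1) * 2 ^ (Fintype.card α) := by
  classical
  have fiber_bound : ∀ D : Finset α,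
      ((𝒮 ×ˢ 𝒯).filter (fun p => p.1 ∆ p.2 = D)).card ≤ Fintype.card α + 1 := by
    intro D
    set B := (𝒮 ×ˢ 𝒯).filter (fun p => p.1 ∆ p.2 = D) with hB
    have hmem : ∀ p ∈ B, p.1 ∈ 𝒮 ∧ p.2 ∈ 𝒯 ∧ p.1 ∆ p.2 = D := by
      intro p hp
      rw [hB, Finset.mem_filter, Finset.mem_product] at hp
      exact ⟨hp.1.1, hp.1.2, hp.2⟩
    set B1 := B.filter (fun p => p.1 ∩ p.2 = ∅) with hB1
    set B2 := B.filter (fun p => ¬ (p.1 ∩ p.2 = ∅)) with hB2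
    have hsplit : B1.card + B2.card = B.card :=
      Finset.card_filter_add_card_filter_not _
    -- bound B1
    have hB1le : B1.card ≤ D.card + 1 := by
      have hinj1 : Set.InjOn Prod.fst (B1 : Set (Finset α × Finset α)) := by
        intro p hp q hq hfe
        rw [Finset.mem_coe, hB1, Finset.mem_filter] at hp hq
        obtain ⟨hpB, hpdis⟩ := hp
        obtain ⟨hqB, hqdis⟩ := hq
        obtain ⟨_, _, hpD⟩ := hmem p hpB
        obtain ⟨_, _, hqD⟩ := hmem q hqB
        have hsnd : ∀ r : Finset α × Finset α, r.1 ∆ r.2 = D → r.1 ∩ r.2 = ∅ →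
            r.2 = D \ r.1 := by
          intro r hrD hrdis
          ext u
          rw [Finset.mem_sdiff, ← hrD, Finset.mem_symmDiff]
          constructor
          · intro hu
            have hu1 : u ∉ r.1 := by
              intro hu1
              have : u ∈ r.1 ∩ r.2 := Finset.mem_inter.2 ⟨hu1, hu⟩
              rw [hrdis] at this
              exact Finset.notMem_empty u this
            exact ⟨Or.inr ⟨hu, hu1⟩, hu1⟩
          · rintro ⟨h1 | h1, hu1⟩
            · exact absurd h1.1 hu1
            · exact h1.1
        have h1 := hsnd p hpD hpdis
        have h2 := hsnd q hqD hqdis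
        rw [hfe] at h1
        rw [← h2] at h1
        exact Prod.ext hfe h1
      have hcard1 : B1.card = (B1.image Prod.fst).card :=
        (Finset.card_image_of_injOn hinj1).symm
      have hsubD : ∀ S ∈ B1.image Prod.fst, S ⊆ D := by
        intro S hS
        rw [Finset.mem_image] at hS
        obtain ⟨p, hp, rfl⟩ := hS
        rw [hB1, Finset.mem_filter] at hp
        obtain ⟨_, _, hpD⟩ := hmem p hp.1
        intro u hu
        have hu2 : u ∉ p.2 := by
          intro hu2
          have : u ∈ p.1 ∩ p.2 := Finset.mem_inter.2 ⟨hu, hu2⟩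
          rw [hp.2] at this
          exact Finset.notMem_empty u this
        rw [← hpD, Finset.mem_symmDiff]
        exact Or.inl ⟨hu, hu2⟩
      have hclose : ∀ S ∈ B1.image Prod.fst, ∀ S' ∈ B1.image Prod.fst,
          (S \ S').card ≤ 1 := by
        intro S hS S' hS'
        rw [Finset.mem_image] at hS hS'
        obtain ⟨p, hp, rfl⟩ := hS
        obtain ⟨q, hq, rfl⟩ := hS'
        rw [hB1, Finset.mem_filter] at hp hq
        obtain ⟨hp𝒮, hp𝒯, hpD⟩ := hmem p hp.1
        obtain ⟨hq𝒮, hq𝒯, hqD⟩ := hmem q hq.1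
        have hsub2 : p.1 \ q.1 ⊆ p.1 ∩ q.2 := by
          intro u hu
          rw [Finset.mem_sdiff] at hu
          refine Finset.mem_inter.2 ⟨hu.1, ?_⟩
          have hu2 : u ∉ p.2 := by
            intro hu2
            have : u ∈ p.1 ∩ p.2 := Finset.mem_inter.2 ⟨hu.1, hu2⟩
            rw [hp.2] at this
            exact Finset.notMem_empty u this
          have huD : u ∈ D := by
            rw [← hpD, Finset.mem_symmDiff]
            exact Or.inl ⟨hu.1, hu2⟩
          rw [← hqD, Finset.mem_symmDiff] at huD
          rcases huD with h1 | h1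
          · exact absurd h1.1 hu.2
          · exact h1.1
        exact le_trans (Finset.card_le_card hsub2) (h p.1 hp𝒮 q.2 hq𝒯)
      rw [hcard1]
      exact close_family_card D (B1.image Prod.fst) hsubD hclose
    -- bound B2
    have hB2le : B2.card ≤ (Finset.univ \ D).card := by
      have hx : ∀ p ∈ B2, ∃ x, p.1 ∩ p.2 = {x} ∧ x ∈ Finset.univ \ D := by
        intro p hp
        rw [hB2, Finset.mem_filter] at hp
        obtain ⟨hp𝒮, hp𝒯, hpD⟩ := hmem p hp.1
        have hne : (p.1 ∩ p.2).Nonempty := Finset.nonempty_iff_ne_empty.2 hp.2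
        have hle := h p.1 hp𝒮 p.2 hp𝒯
        have : (p.1 ∩ p.2).card = 1 := le_antisymm hle (Finset.card_pos.2 hne)
        obtain ⟨x, hxeq⟩ := Finset.card_eq_one.1 this
        refine ⟨x, hxeq, ?_⟩
        have hxmem : x ∈ p.1 ∩ p.2 := hxeq ▸ Finset.mem_singleton_self x
        rw [Finset.mem_sdiff]
        refine ⟨Finset.mem_univ x, ?_⟩
        rw [← hpD, Finset.mem_symmDiff]
        rw [Finset.mem_inter] at hxmem
        rintro (h1 | h1)
        · exact h1.2 hxmem.2
        · exact h1.2 hxmem.1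
      -- uniqueness of pair given intersection point
      have key : ∀ p ∈ B2, ∀ q ∈ B2, ∀ x, p.1 ∩ p.2 = {x} → q.1 ∩ q.2 = {x} →
          p.1 ⊆ q.1 ∧ p.2 ⊆ q.2 := by
        intro p hp q hq x hpx hqx
        rw [hB2, Finset.mem_filter] at hp hq
        obtain ⟨hp𝒮, hp𝒯, hpD⟩ := hmem p hp.1
        obtain ⟨hq𝒮, hq𝒯, hqD⟩ := hmem q hq.1
        have hxp : x ∈ p.1 ∩ p.2 := hpx ▸ Finset.mem_singleton_self x
        have hxq : x ∈ q.1 ∩ q.2 := hqx ▸ Finset.mem_singleton_self x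
        rw [Finset.mem_inter] at hxp hxq
        constructor
        · intro u hu
          by_cases hux : u = x
          · rw [hux]; exact hxq.1
          · have hup2 : u ∉ p.2 := by
              intro h2
              apply hux
              have : u ∈ p.1 ∩ p.2 := Finset.mem_inter.2 ⟨hu, h2⟩
              rw [hpx] at this
              exact Finset.mem_singleton.1 this
            have huD : u ∈ D := by
              rw [← hpD, Finset.mem_symmDiff]
              exact Or.inl ⟨hu, hup2⟩
            by_contra huq1
            have huq2 : u ∈ q.2 := by
              rw [← hqD, Finset.mem_symmDiff] at huD
              rcases huD with h1 | h1
              · exact absurd h1.1 huq1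
              · exact h1.1
            have hpair : ({u, x} : Finset α) ⊆ p.1 ∩ q.2 := by
              intro v hv
              rw [Finset.mem_insert, Finset.mem_singleton] at hv
              rcases hv with rfl | rfl
              · exact Finset.mem_inter.2 ⟨hu, huq2⟩
              · exact Finset.mem_inter.2 ⟨hxp.1, hxq.2⟩
            have h2 : 2 ≤ (p.1 ∩ q.2).card := by
              calc 2 = ({u, x} : Finset α).card := (Finset.card_pair hux).symm
                _ ≤ _ := Finset.card_le_card hpair
            have := h p.1 hp𝒮 q.2 hq𝒯
            omega
        · intro u hu
          by_cases hux : u = x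
          · rw [hux]; exact hxq.2
          · have hup1 : u ∉ p.1 := by
              intro h2
              apply hux
              have : u ∈ p.1 ∩ p.2 := Finset.mem_inter.2 ⟨h2, hu⟩
              rw [hpx] at this
              exact Finset.mem_singleton.1 this
            have huD : u ∈ D := by
              rw [← hpD, Finset.mem_symmDiff]
              exact Or.inr ⟨hu, hup1⟩
            by_contra huq2
            have huq1 : u ∈ q.1 := by
              rw [← hqD, Finset.mem_symmDiff] at huD
              rcases huD with h1 | h1
              · exact h1.1
              · exact absurd h1.1 huq2
            have hpair : ({u, x} : Finset α) ⊆ q.1 ∩ p.2 := by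
              intro v hv
              rw [Finset.mem_insert, Finset.mem_singleton] at hv
              rcases hv with rfl | rfl
              · exact Finset.mem_inter.2 ⟨huq1, hu⟩
              · exact Finset.mem_inter.2 ⟨hxq.1, hxp.2⟩
            have h2 : 2 ≤ (q.1 ∩ p.2).card := by
              calc 2 = ({u, x} : Finset α).card := (Finset.card_pair hux).symm
                _ ≤ _ := Finset.card_le_card hpair
            have := h q.1 hq𝒮 p.2 hp𝒯
            omega
      have hinj2 : Set.InjOn (fun p : Finset α × Finset α => p.1 ∩ p.2) (B2 : Set (Finset α × Finset α)) := by
        intro p hp q hq hfe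
        simp only at hfe
        rw [Finset.mem_coe] at hp hq
        have hp' : p ∈ B2 := hp
        have hq' : q ∈ B2 := hq
        obtain ⟨x, hpx, _⟩ := hx p hp'
        have hqx : q.1 ∩ q.2 = {x} := by rw [← hfe]; exact hpx
        obtain ⟨hpq1, hpq2⟩ := key p hp' q hq' x hpx hqx
        obtain ⟨hqp1, hqp2⟩ := key q hq' p hp' x hqx hpx
        exact Prod.ext (Finset.Subset.antisymm hpq1 hqp1) (Finset.Subset.antisymm hpq2 hqp2)
      calc B2.card = (B2.image (fun p => p.1 ∩ p.2)).card :=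
            (Finset.card_image_of_injOn hinj2).symm
        _ ≤ ((Finset.univ \ D).image fun y => ({y} : Finset α)).card := by
            apply Finset.card_le_card
            intro s hs
            rw [Finset.mem_image] at hs ⊢
            obtain ⟨p, hp, rfl⟩ := hs
            obtain ⟨x, hpx, hxD⟩ := hx p hp
            exact ⟨x, hxD, hpx.symm⟩
        _ ≤ (Finset.univ \ D).card := Finset.card_image_le
    have hDcard : D.card + (Finset.univ \ D).card = Fintype.card α := by
      rw [Finset.card_sdiff_of_subset (Finset.subset_univ D), Finset.card_univ]
      have : D.card ≤ Fintype.card α := by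
        rw [← Finset.card_univ]
        exact Finset.card_le_card (Finset.subset_univ D)
      omega
    omega
  calc 𝒮.card * 𝒯.card = (𝒮 ×ˢ 𝒯).card := (Finset.card_product 𝒮 𝒯).symm
    _ = ∑ D ∈ Finset.univ.powerset,
          ((𝒮 ×ˢ 𝒯).filter (fun p => p.1 ∆ p.2 = D)).card := by
        apply Finset.card_eq_sum_card_fiberwise
        intro p _
        exact Finset.mem_powerset.2 (Finset.subset_univ _)
    _ ≤ ∑ _D ∈ Finset.univ.powerset, (Fintype.card α + 1) := by
        apply Finset.sum_le_sum
        intro D _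
        exact fiber_bound D
    _ = (Fintype.card α + 1) * 2 ^ (Fintype.card α) := by
        rw [Finset.sum_const, Finset.card_powerset, Finset.card_univ, smul_eq_mul,
          Nat.mul_comm]

end Counting

/-- For any UFA with `n ≥ 0` states recognizing `L`, there is a UFA with at most
`√(n+1) · 2^(n/2)` states recognizing the complement of `L`. -/
theorem ufa_complement {Q A : Type} [Fintype Q] [Fintype A]
    (M : NFA' Q A) (hM : M.Unambiguous) :
    ∃ (Q' : Type) (_ : Fintype Q') (M' : NFA' Q' A),
      M'.Unambiguous ∧ M'.Lang = M.Langᶜ ∧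
      (Fintype.card Q' : ℝ) ≤
        Real.sqrt (Fintype.card Q + 1) * 2 ^ ((Fintype.card Q : ℝ) / 2) := by

  classical
  haveI hF1 : Fintype ↥(M.fwdStates) := Fintype.ofFinite _
  haveI hF2 : Fintype ↥(M.bwdStates) := Fintype.ofFinite _
  set n := Fintype.card Q with hn
  set 𝒮 : Finset (Finset Q) :=
    Finset.univ.filter (fun s : Finset Q => (↑s : Set Q) ∈ M.fwdStates) with h𝒮
  set 𝒯 : Finset (Finset Q) :=
    Finset.univ.filter (fun s : Finset Q => (↑s : Set Q) ∈ M.bwdStates) with h𝒯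
  have hScard : Fintype.card ↥(M.fwdStates) = 𝒮.card := by
    rw [h𝒮, ← Fintype.card_subtype]
    exact Fintype.card_congr
      ((Fintype.finsetEquivSet.subtypeEquiv (fun s => by simp)).symm)
  have hTcard : Fintype.card ↥(M.bwdStates) = 𝒯.card := by
    rw [h𝒯, ← Fintype.card_subtype]
    exact Fintype.card_congr
      ((Fintype.finsetEquivSet.subtypeEquiv (fun s => by simp)).symm)
  have hcross : ∀ s ∈ 𝒮, ∀ t ∈ 𝒯, (s ∩ t).card ≤ 1 := by
    intro s hs t ht
    rw [h𝒮, Finset.mem_filter] at hs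
    rw [h𝒯, Finset.mem_filter] at ht
    have hss := M.reach_coreach_subsingleton hM hs.2 ht.2
    apply Finset.card_le_one.2
    intro a ha b hb
    rw [Finset.mem_inter] at ha hb
    exact hss ⟨Finset.mem_coe.2 ha.1, Finset.mem_coe.2 ha.2⟩
      ⟨Finset.mem_coe.2 hb.1, Finset.mem_coe.2 hb.2⟩
  have hmul : 𝒮.card * 𝒯.card ≤ (n + 1) * 2 ^ n := by
    rw [hn]
    exact cross_card_mul 𝒮 𝒯 hcross
  have real_key : ∀ c : ℕ, c * c ≤ (n + 1) * 2 ^ n →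
      (c : ℝ) ≤ Real.sqrt ((n : ℝ) + 1) * 2 ^ ((n : ℝ) / 2) := by
    intro c hc
    have h1 : (c : ℝ) * c ≤ ((n : ℝ) + 1) * 2 ^ (n : ℕ) := by exact_mod_cast hc
    have h2 : (c : ℝ) = Real.sqrt ((c : ℝ) * (c : ℝ)) :=
      (Real.sqrt_mul_self (Nat.cast_nonneg c)).symm
    rw [h2]
    refine le_trans (Real.sqrt_le_sqrt h1) (le_of_eq ?_)
    rw [Real.sqrt_mul (by positivity)]
    congr 1
    rw [Real.sqrt_eq_rpow, ← Real.rpow_natCast 2 n, ← Real.rpow_mul (by norm_num)]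
    congr 1
    ring
  rcases le_total (Fintype.card ↥(M.fwdStates)) (Fintype.card ↥(M.bwdStates)) with hle | hle
  · refine ⟨↥(M.fwdStates), hF1, M.fwdCompl, M.fwdCompl_unambiguous, M.fwdCompl_lang, ?_⟩
    apply real_key
    calc Fintype.card ↥(M.fwdStates) * Fintype.card ↥(M.fwdStates)
        ≤ Fintype.card ↥(M.fwdStates) * Fintype.card ↥(M.bwdStates) :=
          Nat.mul_le_mul_left _ hle
      _ = 𝒮.card * 𝒯.card := by rw [hScard, hTcard]
      _ ≤ (n + 1) * 2 ^ n := hmul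
  · refine ⟨↥(M.bwdStates), hF2, M.bwdCompl, M.bwdCompl_unambiguous, M.bwdCompl_lang, ?_⟩
    apply real_key
    calc Fintype.card ↥(M.bwdStates) * Fintype.card ↥(M.bwdStates)
        ≤ Fintype.card ↥(M.fwdStates) * Fintype.card ↥(M.bwdStates) :=
          Nat.mul_le_mul_right _ hle
      _ = 𝒮.card * 𝒯.card := by rw [hScard, hTcard]
      _ ≤ (n + 1) * 2 ^ n := hmul
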